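/- Fix α ∈ (−1,1), a real γ ≥ 1, an integer p ≥ 1 with γ(α+1) > p+1, and a constant K > 0. Then there exists a constant C > 0 such that for every integer m ≥ 2 the following holds: with mesh points x_j = (j/m)^γ (j = 0, …, m) and widths h_j = x_j − x_{j−1}, for any nonnegative reals e_1, …, e_m satisfying e_1 ≤ K·h_1^{α+1} and e_j ≤ K·h_j^{p+2}·x_{j−1}^{α−p−1} for all 2 ≤ j ≤ m, one has Σ_{j=1}^m e_j ≤ C · m^{−(p+1)}. All real powers are Real.rpow. -/

import Mathlib

open scoped BigOperators

private lemma rpow_diff_le {γ : ℝ} (hγ : 1 ≤ γ) {a b : ℝ} (ha : 0 ≤ a) (hab : a ≤ b) :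
    b ^ γ - a ^ γ ≤ γ * b ^ (γ - 1) * (b - a) := by
  have hγ0 : (0:ℝ) < γ := lt_of_lt_of_le one_pos hγ
  rcases eq_or_lt_of_le (ha.trans hab) with hb | hb
  · have ha0 : a = 0 := le_antisymm (hab.trans_eq hb.symm) ha
    simp [← hb, ha0, Real.zero_rpow hγ0.ne']
  · have hs : (-1:ℝ) ≤ a / b - 1 := by
      have : 0 ≤ a / b := div_nonneg ha hb.le
      linarith
    have key := one_add_mul_self_le_rpow_one_add hs hγ
    rw [show 1 + (a / b - 1) = a / b by ring, Real.div_rpow ha hb.le] at key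
    have hbγ : 0 < b ^ γ := Real.rpow_pos_of_pos hb γ
    have h1 : (1 + γ * (a / b - 1)) * b ^ γ ≤ a ^ γ := (le_div_iff₀ hbγ).mp key
    have hsplit : b ^ γ = b * b ^ (γ - 1) := by
      rw [show γ = 1 + (γ - 1) by ring, Real.rpow_add hb, Real.rpow_one]
      ring_nf
    have h2 : (1 + γ * (a / b - 1)) * b ^ γ = b ^ γ - γ * b ^ (γ - 1) * (b - a) := by
      rw [hsplit]; field_simp; ring
    linarith [h2 ▸ h1]

private lemma rpow_diff_ge_left {q : ℝ} (hq : 1 ≤ q) {a b : ℝ} (ha : 0 < a) (hab : a ≤ b) :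
    q * a ^ (q - 1) * (b - a) ≤ b ^ q - a ^ q := by
  have hs : (-1:ℝ) ≤ b / a - 1 := by
    have : 0 ≤ b / a := div_nonneg (ha.le.trans hab) ha.le
    linarith
  have key := one_add_mul_self_le_rpow_one_add hs hq
  rw [show 1 + (b / a - 1) = b / a by ring, Real.div_rpow (ha.le.trans hab) ha.le] at key
  have haq : 0 < a ^ q := Real.rpow_pos_of_pos ha q
  have h1 : (1 + q * (b / a - 1)) * a ^ q ≤ b ^ q := (le_div_iff₀ haq).mp key
  have hsplit : a ^ q = a * a ^ (q - 1) := by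
    rw [show q = 1 + (q - 1) by ring, Real.rpow_add ha, Real.rpow_one]
    ring_nf
  have h2 : (1 + q * (b / a - 1)) * a ^ q = a ^ q + q * a ^ (q - 1) * (b - a) := by
    rw [hsplit]; field_simp
  linarith [h2 ▸ h1]

private lemma rpow_diff_ge_right {q : ℝ} (hq0 : 0 < q) (hq1 : q ≤ 1) {a b : ℝ} (ha : 0 ≤ a)
    (hab : a ≤ b) (hb : 0 < b) :
    q * b ^ (q - 1) * (b - a) ≤ b ^ q - a ^ q := by
  have hs : (-1:ℝ) ≤ a / b - 1 := by
    have : 0 ≤ a / b := div_nonneg ha hb.le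
    linarith
  have key := rpow_one_add_le_one_add_mul_self hs hq0.le hq1
  rw [show 1 + (a / b - 1) = a / b by ring, Real.div_rpow ha hb.le] at key
  have hbq : 0 < b ^ q := Real.rpow_pos_of_pos hb q
  have h1 : a ^ q ≤ (1 + q * (a / b - 1)) * b ^ q := (div_le_iff₀ hbq).mp key
  have hsplit : b ^ q = b * b ^ (q - 1) := by
    rw [show q = 1 + (q - 1) by ring, Real.rpow_add hb, Real.rpow_one]
    ring_nf
  have h2 : (1 + q * (a / b - 1)) * b ^ q = b ^ q - q * b ^ (q - 1) * (b - a) := by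
    rw [hsplit]; field_simp; ring
  linarith [h2 ▸ h1]

private lemma rpow_le_tel {s : ℝ} (hs : -1 < s) {j : ℕ} (hj : 2 ≤ j) :
    (j:ℝ) ^ s ≤ (1 + 2 ^ s) / (s + 1) * ((j:ℝ) ^ (s + 1) - ((j:ℝ) - 1) ^ (s + 1)) := by
  have hJ : (2:ℝ) ≤ (j:ℝ) := by exact_mod_cast hj
  have hq : (0:ℝ) < s + 1 := by linarith
  have ha1 : (1:ℝ) ≤ (j:ℝ) - 1 := by linarith
  have hab : (j:ℝ) - 1 ≤ (j:ℝ) := by linarith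
  have hD0 : 0 ≤ (j:ℝ) ^ (s + 1) - ((j:ℝ) - 1) ^ (s + 1) :=
    sub_nonneg.mpr (Real.rpow_le_rpow (by linarith) hab hq.le)
  have h2s : (0:ℝ) < 2 ^ s := Real.rpow_pos_of_pos two_pos s
  rw [div_mul_eq_mul_div, le_div_iff₀ hq]
  rcases le_or_gt 0 s with hcase | hcase
  · -- s ≥ 0 : use lower tangent at left endpoint a = j - 1
    have key := rpow_diff_ge_left (q := s + 1) (by linarith) (a := (j:ℝ) - 1) (b := (j:ℝ))
      (by linarith) hab
    rw [show s + 1 - 1 = s by ring, show (j:ℝ) - ((j:ℝ) - 1) = 1 by ring, mul_one] at key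
    -- key : (s+1) * ((j:ℝ)-1)^s ≤ D
    have hhalf : (j:ℝ) / 2 ≤ (j:ℝ) - 1 := by linarith
    have h3 : ((j:ℝ) / 2) ^ s ≤ ((j:ℝ) - 1) ^ s :=
      Real.rpow_le_rpow (by linarith) hhalf hcase
    have h4 : ((j:ℝ) / 2) ^ s = (j:ℝ) ^ s / 2 ^ s :=
      Real.div_rpow (by linarith) (by norm_num) s
    have h5 : (j:ℝ) ^ s ≤ 2 ^ s * ((j:ℝ) - 1) ^ s := by
      rw [h4] at h3
      calc (j:ℝ) ^ s = 2 ^ s * ((j:ℝ) ^ s / 2 ^ s) := by field_simp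
      _ ≤ 2 ^ s * ((j:ℝ) - 1) ^ s := by
          exact mul_le_mul_of_nonneg_left h3 h2s.le
    have k1 : 2 ^ s * ((s + 1) * ((j:ℝ) - 1) ^ s) ≤ 2 ^ s * ((j:ℝ) ^ (s + 1) - ((j:ℝ) - 1) ^ (s + 1)) :=
      mul_le_mul_of_nonneg_left key h2s.le
    have k2 : (j:ℝ) ^ s * (s + 1) ≤ (2 ^ s * ((j:ℝ) - 1) ^ s) * (s + 1) :=
      mul_le_mul_of_nonneg_right h5 hq.le
    nlinarith [hD0]
  · -- -1 < s < 0 : use lower tangent at right endpoint b = j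
    have key := rpow_diff_ge_right (q := s + 1) hq (by linarith) (a := (j:ℝ) - 1) (b := (j:ℝ))
      (by linarith) hab (by linarith)
    rw [show s + 1 - 1 = s by ring, show (j:ℝ) - ((j:ℝ) - 1) = 1 by ring, mul_one] at key
    nlinarith

private lemma tele_sum (f : ℕ → ℝ) : ∀ m : ℕ, 1 ≤ m →
    ∑ j ∈ Finset.Icc 2 m, (f j - f (j - 1)) = f m - f 1 := by
  intro m hm
  induction m with
  | zero => omega
  | succ n ih =>
    rcases Nat.lt_or_ge n 1 with hn | hn
    · interval_cases n
      · simp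
    · rw [Finset.sum_Icc_succ_top (by omega), ih hn]
      simp

private lemma sum_rpow_tel {s : ℝ} (hs : -1 < s) {m : ℕ} (hm : 2 ≤ m) :
    ∑ j ∈ Finset.Icc 2 m, (j:ℝ) ^ s ≤ (1 + 2 ^ s) / (s + 1) * (m:ℝ) ^ (s + 1) := by
  have hq : (0:ℝ) < s + 1 := by linarith
  have hc : 0 < (1 + 2 ^ s) / (s + 1) :=
    div_pos (by positivity) hq
  have htel : ∑ j ∈ Finset.Icc 2 m, ((j:ℝ) ^ (s + 1) - ((j:ℝ) - 1) ^ (s + 1))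
      = (m:ℝ) ^ (s + 1) - 1 := by
    calc ∑ j ∈ Finset.Icc 2 m, ((j:ℝ) ^ (s + 1) - ((j:ℝ) - 1) ^ (s + 1))
        = ∑ j ∈ Finset.Icc 2 m, (((j:ℕ):ℝ) ^ (s + 1) - (((j - 1 : ℕ)):ℝ) ^ (s + 1)) := by
          refine Finset.sum_congr rfl fun j hj => ?_
          have hj2 : 2 ≤ j := (Finset.mem_Icc.mp hj).1
          have hc : ((j - 1 : ℕ) : ℝ) = (j:ℝ) - 1 := by
            have : 1 ≤ j := by omega
            push_cast [this]
            ring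
          rw [hc]
    _ = ((m:ℕ):ℝ) ^ (s + 1) - ((1:ℕ):ℝ) ^ (s + 1) :=
          tele_sum (fun j : ℕ => ((j:ℕ):ℝ) ^ (s + 1)) m (by omega)
    _ = (m:ℝ) ^ (s + 1) - 1 := by norm_num
  calc ∑ j ∈ Finset.Icc 2 m, (j:ℝ) ^ s
      ≤ ∑ j ∈ Finset.Icc 2 m,
        (1 + 2 ^ s) / (s + 1) * ((j:ℝ) ^ (s + 1) - ((j:ℝ) - 1) ^ (s + 1)) :=
        Finset.sum_le_sum fun j hj => rpow_le_tel hs (Finset.mem_Icc.mp hj).1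
  _ = (1 + 2 ^ s) / (s + 1) * ((m:ℝ) ^ (s + 1) - 1) := by rw [← Finset.mul_sum, htel]
  _ ≤ (1 + 2 ^ s) / (s + 1) * (m:ℝ) ^ (s + 1) :=
      mul_le_mul_of_nonneg_left (by linarith) hc.le

/-- Convergence of the `h` method with algebraic grading, super-critical case
`γ(α+1) > p+1`: the total error is bounded by `C · m^{-(p+1)}`. -/
theorem h_method_supercritical_grading (α γ : ℝ) (p : ℤ) (K : ℝ)
    (hα₁ : -1 < α) (hα₂ : α < 1) (hγ : 1 ≤ γ) (hp : 1 ≤ p) (hcrit : (p : ℝ) + 1 < γ * (α + 1)) (hK : 0 < K) :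
    ∃ C > 0, ∀ m : ℕ, 2 ≤ m →
      ∀ x h e : ℕ → ℝ,
        (∀ j, j ≤ m → x j = ((j : ℝ) / m) ^ γ) →
        (∀ j, 1 ≤ j → j ≤ m → h j = x j - x (j - 1)) →
        (∀ j, 1 ≤ j → j ≤ m → 0 ≤ e j) →
        e 1 ≤ K * h 1 ^ (α + 1) →
        (∀ j, 2 ≤ j → j ≤ m →
          e j ≤ K * h j ^ ((p : ℝ) + 2) * x (j - 1) ^ (α - p - 1)) →
        ∑ j ∈ Finset.Icc 1 m, e j ≤ C * (m : ℝ) ^ (-((p : ℝ) + 1)) := by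
  have hP : (1:ℝ) ≤ (p:ℝ) := by exact_mod_cast hp
  set P : ℝ := (p : ℝ) with hPdef
  have hγ0 : (0:ℝ) < γ := lt_of_lt_of_le one_pos hγ
  set β : ℝ := γ * (α + 1) with hβdef
  set s : ℝ := β - P - 2 with hsdef
  have hs1 : -1 < s := by rw [hsdef]; linarith
  have hs1' : (0:ℝ) < s + 1 := by linarith
  set A : ℝ := K * γ ^ (P + 2) * 2 ^ (γ * (P + 1 - α)) with hAdef
  have hApos : 0 < A := by
    have h1 : (0:ℝ) < γ ^ (P + 2) := Real.rpow_pos_of_pos hγ0 _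
    have h2 : (0:ℝ) < (2:ℝ) ^ (γ * (P + 1 - α)) := Real.rpow_pos_of_pos two_pos _
    positivity
  set c : ℝ := (1 + 2 ^ s) / (s + 1) with hcdef
  have hcpos : 0 < c := by
    have : (0:ℝ) < 2 ^ s := Real.rpow_pos_of_pos two_pos s
    exact div_pos (by linarith) hs1'
  refine ⟨K + A * c, by positivity, ?_⟩
  intro m hm x h e hx hh he0 he1 hej
  have hm0 : (0:ℝ) < (m:ℝ) := by
    have : 0 < m := by omega
    exact_mod_cast this
  have hm1 : (1:ℝ) ≤ (m:ℝ) := by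
    have : 1 ≤ m := by omega
    exact_mod_cast this
  -- the first interval
  have hx0 : x 0 = 0 := by
    rw [hx 0 (by omega)]
    simp [Real.zero_rpow hγ0.ne']
  have hh1 : h 1 = (m:ℝ) ^ (-γ) := by
    rw [hh 1 le_rfl (by omega), hx 1 (by omega), show (1:ℕ) - 1 = 0 from rfl, hx0,
      sub_zero, Nat.cast_one, one_div, ← Real.rpow_neg_one (m:ℝ),
      ← Real.rpow_mul hm0.le]
    norm_num
  have he1' : e 1 ≤ K * (m:ℝ) ^ (-(P + 1)) := by
    have h2 : h 1 ^ (α + 1) = (m:ℝ) ^ (-β) := by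
      rw [hh1, ← Real.rpow_mul hm0.le, hβdef]
      ring_nf
    have h3 : (m:ℝ) ^ (-β) ≤ (m:ℝ) ^ (-(P + 1)) :=
      Real.rpow_le_rpow_of_exponent_le hm1 (by rw [hβdef]; linarith)
    calc e 1 ≤ K * h 1 ^ (α + 1) := he1
    _ = K * (m:ℝ) ^ (-β) := by rw [h2]
    _ ≤ K * (m:ℝ) ^ (-(P + 1)) := mul_le_mul_of_nonneg_left h3 hK.le
  -- per-term bound on the later intervals
  have key : ∀ j, 2 ≤ j → j ≤ m → e j ≤ A * (j:ℝ) ^ s * (m:ℝ) ^ (-β) := by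
    intro j hj2 hjm
    have hJ2 : (2:ℝ) ≤ (j:ℝ) := by exact_mod_cast hj2
    have hJM : (j:ℝ) ≤ (m:ℝ) := by exact_mod_cast hjm
    have hcast : ((j - 1 : ℕ) : ℝ) = (j:ℝ) - 1 := by
      have : 1 ≤ j := by omega
      push_cast [this]
      ring
    have hb : (0:ℝ) < (j:ℝ) / (m:ℝ) := by positivity
    have ha : (0:ℝ) < ((j:ℝ) - 1) / (m:ℝ) := by
      apply div_pos (by linarith) hm0
    have hxj : x (j - 1) = (((j:ℝ) - 1) / (m:ℝ)) ^ γ := by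
      rw [hx (j - 1) (by omega), hcast]
    have hhj : h j = ((j:ℝ) / (m:ℝ)) ^ γ - (((j:ℝ) - 1) / (m:ℝ)) ^ γ := by
      rw [hh j (by omega) hjm, hx j hjm, hxj]
    have hab : ((j:ℝ) - 1) / (m:ℝ) ≤ (j:ℝ) / (m:ℝ) := by
      rw [div_le_div_iff₀ hm0 hm0]
      have hmm : 0 ≤ (m:ℝ) := hm0.le
      nlinarith [hmm]
    have hhj0 : 0 ≤ h j := by
      rw [hhj]
      have := Real.rpow_le_rpow ha.le hab hγ0.le
      linarith
    have hhj2 : h j ≤ γ * ((j:ℝ) / (m:ℝ)) ^ (γ - 1) * (1 / (m:ℝ)) := by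
      rw [hhj]
      have h1 := rpow_diff_le hγ ha.le hab
      have hdiff : (j:ℝ) / (m:ℝ) - ((j:ℝ) - 1) / (m:ℝ) = 1 / (m:ℝ) := by
        field_simp
        ring
      rw [hdiff] at h1
      exact h1
    have hstep1 : h j ^ (P + 2) ≤ (γ * ((j:ℝ) / (m:ℝ)) ^ (γ - 1) * (1 / (m:ℝ))) ^ (P + 2) :=
      Real.rpow_le_rpow hhj0 hhj2 (by linarith)
    have hrn : (0:ℝ) ≤ ((j:ℝ) / (m:ℝ)) ^ (γ - 1) := Real.rpow_nonneg hb.le _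
    have hmulsplit : (γ * ((j:ℝ) / (m:ℝ)) ^ (γ - 1) * (1 / (m:ℝ))) ^ (P + 2)
        = γ ^ (P + 2) * ((j:ℝ) / (m:ℝ)) ^ ((γ - 1) * (P + 2)) * (m:ℝ) ^ (-(P + 2)) := by
      rw [Real.mul_rpow (by positivity) (by positivity),
        Real.mul_rpow hγ0.le hrn, ← Real.rpow_mul hb.le,
        one_div, ← Real.rpow_neg_one (m:ℝ), ← Real.rpow_mul hm0.le]
      ring_nf
    -- bound on x (j-1) ^ (α - P - 1)
    have hxpow : x (j - 1) ^ (α - P - 1)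
        ≤ ((j:ℝ) / (m:ℝ)) ^ (γ * (α - P - 1)) * 2 ^ (γ * (P + 1 - α)) := by
      rw [hxj, ← Real.rpow_mul ha.le]
      have hbase : (j:ℝ) / (2 * (m:ℝ)) ≤ ((j:ℝ) - 1) / (m:ℝ) := by
        rw [div_le_div_iff₀ (by positivity) hm0]
        have hmm : 0 ≤ ((j:ℝ) - 2) * (m:ℝ) := mul_nonneg (by linarith) hm0.le
        linarith [hmm]
      have hneg : γ * (α - P - 1) ≤ 0 :=
        mul_nonpos_of_nonneg_of_nonpos hγ0.le (by linarith)
      have h1 : (((j:ℝ) - 1) / (m:ℝ)) ^ (γ * (α - P - 1))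
          ≤ ((j:ℝ) / (2 * (m:ℝ))) ^ (γ * (α - P - 1)) :=
        Real.rpow_le_rpow_of_nonpos (by positivity) hbase hneg
      have h2 : ((j:ℝ) / (2 * (m:ℝ))) ^ (γ * (α - P - 1))
          = ((j:ℝ) / (m:ℝ)) ^ (γ * (α - P - 1)) * 2 ^ (γ * (P + 1 - α)) := by
        rw [show (j:ℝ) / (2 * (m:ℝ)) = ((j:ℝ) / (m:ℝ)) * (2:ℝ)⁻¹ by ring,
          Real.mul_rpow hb.le (by norm_num),
          Real.inv_rpow (by norm_num), ← Real.rpow_neg (by norm_num)]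
        ring_nf
      rw [← h2]
      exact h1
    have hx0' : (0:ℝ) ≤ x (j - 1) ^ (α - P - 1) := by
      rw [hxj]
      exact Real.rpow_nonneg (Real.rpow_nonneg ha.le γ) _
    have hB1 : (0:ℝ) ≤ K * (γ ^ (P + 2) * ((j:ℝ) / (m:ℝ)) ^ ((γ - 1) * (P + 2))
        * (m:ℝ) ^ (-(P + 2))) := by
      have := Real.rpow_nonneg hb.le ((γ - 1) * (P + 2))
      have := Real.rpow_nonneg hm0.le (-(P + 2))
      have := Real.rpow_nonneg hγ0.le (P + 2)
      positivity
    have hW : ((j:ℝ) / (m:ℝ)) ^ ((γ - 1) * (P + 2)) * ((j:ℝ) / (m:ℝ)) ^ (γ * (α - P - 1))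
        = (j:ℝ) ^ s * (m:ℝ) ^ (-s) := by
      rw [← Real.rpow_add hb, show (γ - 1) * (P + 2) + γ * (α - P - 1) = s by
        rw [hsdef, hβdef]; ring,
        Real.div_rpow (by linarith : (0:ℝ) ≤ (j:ℝ)) hm0.le,
        Real.rpow_neg hm0.le, div_eq_mul_inv]
    have hM2 : (m:ℝ) ^ (-s) * (m:ℝ) ^ (-(P + 2)) = (m:ℝ) ^ (-β) := by
      rw [← Real.rpow_add hm0, show -s + -(P + 2) = -β by rw [hsdef]; ring]
    calc e j ≤ K * h j ^ (P + 2) * x (j - 1) ^ (α - P - 1) := hej j hj2 hjm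
    _ ≤ K * (γ ^ (P + 2) * ((j:ℝ) / (m:ℝ)) ^ ((γ - 1) * (P + 2)) * (m:ℝ) ^ (-(P + 2)))
        * (((j:ℝ) / (m:ℝ)) ^ (γ * (α - P - 1)) * 2 ^ (γ * (P + 1 - α))) := by
      apply mul_le_mul _ hxpow hx0' hB1
      rw [← hmulsplit]
      exact mul_le_mul_of_nonneg_left hstep1 hK.le
    _ = K * γ ^ (P + 2) * 2 ^ (γ * (P + 1 - α))
        * (((j:ℝ) / (m:ℝ)) ^ ((γ - 1) * (P + 2)) * ((j:ℝ) / (m:ℝ)) ^ (γ * (α - P - 1)))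
        * (m:ℝ) ^ (-(P + 2)) := by ring
    _ = A * (j:ℝ) ^ s * ((m:ℝ) ^ (-s) * (m:ℝ) ^ (-(P + 2))) := by
      rw [hW, hAdef]; ring
    _ = A * (j:ℝ) ^ s * (m:ℝ) ^ (-β) := by rw [hM2]
  -- assemble
  have hsplit : Finset.Icc 1 m = insert 1 (Finset.Icc 2 m) := by
    ext j
    simp only [Finset.mem_Icc, Finset.mem_insert]
    omega
  have hnotmem : 1 ∉ Finset.Icc 2 m := by simp
  rw [hsplit, Finset.sum_insert hnotmem]
  have hsum2 : ∑ j ∈ Finset.Icc 2 m, e j ≤ A * c * (m:ℝ) ^ (-(P + 1)) := by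
    calc ∑ j ∈ Finset.Icc 2 m, e j
        ≤ ∑ j ∈ Finset.Icc 2 m, A * (j:ℝ) ^ s * (m:ℝ) ^ (-β) :=
          Finset.sum_le_sum fun j hj =>
            key j (Finset.mem_Icc.mp hj).1 (Finset.mem_Icc.mp hj).2
    _ = A * (m:ℝ) ^ (-β) * ∑ j ∈ Finset.Icc 2 m, (j:ℝ) ^ s := by
        rw [Finset.mul_sum]
        exact Finset.sum_congr rfl fun j _ => by ring
    _ ≤ A * (m:ℝ) ^ (-β) * (c * (m:ℝ) ^ (s + 1)) := by
        apply mul_le_mul_of_nonneg_left _ (by positivity)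
        rw [hcdef]
        exact sum_rpow_tel hs1 hm
    _ = A * c * ((m:ℝ) ^ (-β) * (m:ℝ) ^ (s + 1)) := by ring
    _ = A * c * (m:ℝ) ^ (-(P + 1)) := by
        rw [← Real.rpow_add hm0, show -β + (s + 1) = -(P + 1) by rw [hsdef]; ring]
  have hfin : (K + A * c) * (m:ℝ) ^ (-(P + 1))
      = K * (m:ℝ) ^ (-(P + 1)) + A * c * (m:ℝ) ^ (-(P + 1)) := by ring
  rw [hfin]
  exact add_le_add he1' hsum2
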